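/- Let T be a bounded operator with closed range on a complex Hilbert space and let T = U − V be a proper splitting. Then I − U† V is invertible in L(H) and T† = (I − U† V)^{-1} U†. -/

import Mathlib

open ContinuousLinearMap

/-- `Td` is the Moore–Penrose inverse of `T`. -/
def IsMoorePenroseInverse {H : Type*} [NormedAddCommGroup H] [InnerProductSpace ℂ H]
    [CompleteSpace H] (T Td : H →L[ℂ] H) : Prop :=
  T ∘L Td ∘L T = T ∧ Td ∘L T ∘L Td = Td ∧
    IsSelfAdjoint (T ∘L Td) ∧ IsSelfAdjoint (Td ∘L T)

section Aux
variable {H : Type*} [NormedAddCommGroup H] [InnerProductSpace ℂ H] [CompleteSpace H]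

private lemma aux_idem_apply (Q : H →L[ℂ] H) (hQ2 : Q * Q = Q) (x : H) : Q (Q x) = Q x := by
  simpa [ContinuousLinearMap.mul_apply] using ContinuousLinearMap.ext_iff.mp hQ2 x

private lemma aux_ker_eq (P Q : H →L[ℂ] H) (hP : IsSelfAdjoint P) (hQ : IsSelfAdjoint Q)
    (hP2 : P * P = P) (hQ2 : Q * Q = Q)
    (h : LinearMap.ker (P : H →ₗ[ℂ] H) = LinearMap.ker (Q : H →ₗ[ℂ] H)) : P = Q := by
  have key : ∀ (A B : H →L[ℂ] H), B * B = B →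
      LinearMap.ker (A : H →ₗ[ℂ] H) = LinearMap.ker (B : H →ₗ[ℂ] H) → A * B = A := by
    intro A B hB2 hAB
    ext x
    have hx : x - B x ∈ LinearMap.ker (B : H →ₗ[ℂ] H) := by
      simp [LinearMap.mem_ker, map_sub, aux_idem_apply B hB2 x]
    rw [← hAB] at hx
    have hx' : A x - A (B x) = 0 := by simpa [LinearMap.mem_ker, map_sub] using hx
    show A (B x) = A x
    exact (sub_eq_zero.mp hx').symm
  have hPQ : P * Q = P := key P Q hQ2 h
  have hQP : Q * P = Q := key Q P hP2 h.symm
  calc P = star P := hP.symm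
    _ = star (P * Q) := by rw [hPQ]
    _ = star Q * star P := star_mul _ _
    _ = Q * P := by rw [hP.star_eq, hQ.star_eq]
    _ = Q := hQP

private lemma aux_ran_eq (P Q : H →L[ℂ] H) (hP : IsSelfAdjoint P) (hQ : IsSelfAdjoint Q)
    (hP2 : P * P = P) (hQ2 : Q * Q = Q)
    (h : LinearMap.range (P : H →ₗ[ℂ] H) = LinearMap.range (Q : H →ₗ[ℂ] H)) : P = Q := by
  have key : ∀ (A B : H →L[ℂ] H), A * A = A →
      LinearMap.range (A : H →ₗ[ℂ] H) = LinearMap.range (B : H →ₗ[ℂ] H) → A * B = B := by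
    intro A B hA2 hAB
    ext x
    have hx : B x ∈ LinearMap.range (A : H →ₗ[ℂ] H) := by rw [hAB]; exact ⟨x, rfl⟩
    obtain ⟨y, hy⟩ := hx
    show A (B x) = B x
    rw [← hy, ContinuousLinearMap.coe_coe, aux_idem_apply A hA2 y]
  have hPQ : P * Q = Q := key P Q hP2 h
  have hQP : Q * P = P := key Q P hQ2 h.symm
  calc P = Q * P := hQP.symm
    _ = star Q * star P := by rw [hP.star_eq, hQ.star_eq]
    _ = star (P * Q) := (star_mul _ _).symm
    _ = star Q := by rw [hPQ]
    _ = Q := hQ.star_eq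

end Aux

/-- For a proper splitting `T = U - V` of a closed range operator, `I - U†V` is invertible
and `T† = (I - U†V)⁻¹ U†`. -/
theorem Td_eq_inv_comp_Ud
    {H : Type*} [NormedAddCommGroup H] [InnerProductSpace ℂ H] [CompleteSpace H]
    (T U V Ud Td : H →L[ℂ] H)
    (hTcr : IsClosed (LinearMap.range (T : H →ₗ[ℂ] H) : Set H))
    (hsplit : T = U - V)
    (hran : LinearMap.range (U : H →ₗ[ℂ] H) = LinearMap.range (T : H →ₗ[ℂ] H))
    (hker : LinearMap.ker (U : H →ₗ[ℂ] H) = LinearMap.ker (T : H →ₗ[ℂ] H))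
    (hUd : IsMoorePenroseInverse U Ud) (hTd : IsMoorePenroseInverse T Td) :
    IsUnit (1 - Ud ∘L V) ∧ (1 - Ud ∘L V) ∘L Td = Ud := by
  obtain ⟨hU1, hU2, hU3, hU4⟩ := hUd
  obtain ⟨hT1, hT2, hT3, hT4⟩ := hTd
  -- reinterpret compositions as ring multiplication (definitionally equal)
  have hU1' : U * (Ud * U) = U := hU1
  have hU2' : Ud * (U * Ud) = Ud := hU2
  have hT1' : T * (Td * T) = T := hT1
  have hT2' : Td * (T * Td) = Td := hT2
  have hU3' : IsSelfAdjoint (U * Ud) := hU3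
  have hU4' : IsSelfAdjoint (Ud * U) := hU4
  have hT3' : IsSelfAdjoint (T * Td) := hT3
  have hT4' : IsSelfAdjoint (Td * T) := hT4
  -- kernels and ranges of the projections
  have kP : ∀ (A Ad : H →L[ℂ] H), A * (Ad * A) = A →
      LinearMap.ker ((Ad * A : H →L[ℂ] H) : H →ₗ[ℂ] H) = LinearMap.ker (A : H →ₗ[ℂ] H) := by
    intro A Ad h
    ext x
    simp only [LinearMap.mem_ker, ContinuousLinearMap.coe_coe, ContinuousLinearMap.mul_apply]
    constructor
    · intro hx
      have h1 : A (Ad (A x)) = A x := by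
        simpa [ContinuousLinearMap.mul_apply] using ContinuousLinearMap.ext_iff.mp h x
      rw [hx, map_zero] at h1
      exact h1.symm
    · intro hx; rw [hx, map_zero]
  have rQ : ∀ (A Ad : H →L[ℂ] H), A * (Ad * A) = A →
      LinearMap.range ((A * Ad : H →L[ℂ] H) : H →ₗ[ℂ] H) = LinearMap.range (A : H →ₗ[ℂ] H) := by
    intro A Ad h
    apply le_antisymm
    · rintro _ ⟨x, rfl⟩
      exact ⟨Ad x, rfl⟩
    · rintro _ ⟨x, rfl⟩
      refine ⟨A x, ?_⟩
      show A (Ad (A x)) = A x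
      simpa [ContinuousLinearMap.mul_apply] using ContinuousLinearMap.ext_iff.mp h x
  have idemP : ∀ (A Ad : H →L[ℂ] H), A * (Ad * A) = A →
      (Ad * A) * (Ad * A) = Ad * A := by
    intro A Ad h; rw [mul_assoc, h]
  have idemQ : ∀ (A Ad : H →L[ℂ] H), A * (Ad * A) = A →
      (A * Ad) * (A * Ad) = A * Ad := by
    intro A Ad h
    calc (A * Ad) * (A * Ad) = (A * (Ad * A)) * Ad := by noncomm_ring
      _ = A * Ad := by rw [h]
  have e1 : Ud * U = Td * T := by
    refine aux_ker_eq _ _ hU4' hT4' (idemP U Ud hU1') (idemP T Td hT1') ?_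
    rw [kP U Ud hU1', kP T Td hT1', hker]
  have e2 : U * Ud = T * Td := by
    refine aux_ran_eq _ _ hU3' hT3' (idemQ U Ud hU1') (idemQ T Td hT1') ?_
    rw [rQ U Ud hU1', rQ T Td hT1', hran]
  have hV : V = U - T := by rw [hsplit]; abel
  have h3 : Ud * V * Td = Td - Ud := by
    calc Ud * V * Td = (Ud * U) * Td - Ud * (T * Td) := by rw [hV]; noncomm_ring
      _ = (Td * T) * Td - Ud * (U * Ud) := by rw [e1, ← e2]
      _ = Td - Ud := by rw [mul_assoc, hT2', hU2']
  have h4 : Td * V * Ud = Td - Ud := by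
    calc Td * V * Ud = Td * (U * Ud) - (Td * T) * Ud := by rw [hV]; noncomm_ring
      _ = Td * (T * Td) - (Ud * U) * Ud := by rw [e2, ← e1]
      _ = Td - Ud := by rw [hT2', mul_assoc, hU2']
  constructor
  · refine ⟨⟨1 - Ud * V, 1 + Td * V, ?_, ?_⟩, rfl⟩
    · calc (1 - Ud * V) * (1 + Td * V)
          = 1 + Td * V - Ud * V - (Ud * V * Td) * V := by noncomm_ring
        _ = 1 + Td * V - Ud * V - (Td - Ud) * V := by rw [h3]
        _ = 1 := by noncomm_ring
    · calc (1 + Td * V) * (1 - Ud * V)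
          = 1 + Td * V - Ud * V - (Td * V * Ud) * V := by noncomm_ring
        _ = 1 + Td * V - Ud * V - (Td - Ud) * V := by rw [h4]
        _ = 1 := by noncomm_ring
  · show (1 - Ud * V) * Td = Ud
    calc (1 - Ud * V) * Td = Td - Ud * V * Td := by noncomm_ring
      _ = Td - (Td - Ud) := by rw [h3]
      _ = Ud := by abel
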